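/- Let N ≥ 2. Every b ∈ B_sp^+ with first entry b_1 = − is of the form ẽ_{l_1} ẽ_{l_2} ⋯ ẽ_{l_r}(−,+,…,+,−) for some r ≥ 0 and l_1,…,l_r ∈ {2,…,N}, where (−,+,…,+,−) is the sign sequence with first and last entries − and all other entries +. -/

import Mathlib

namespace CrystalPaper

/-- A sign sequence of length `N`: `true` codes `+`, `false` codes `−`. -/
abbrev Seq (N : ℕ) := Fin N → Bool

/-- The constant sequence `(+,…,+)`. -/
def top (N : ℕ) : Seq N := fun _ => true

/-- The constant sequence `(−,…,−)`. -/
def bot (N : ℕ) : Seq N := fun _ => false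

/-- The sequence `(+^k, −^{N−k})` (first `k` entries `+`, the rest `−`). -/
def lowSeq (N k : ℕ) : Seq N := fun i => decide ((i : ℕ) < k)

/-- The number of `−` entries of a sign sequence. -/
def minusCount (N : ℕ) (b : Seq N) : ℕ :=
  (Finset.univ.filter (fun i => b i = false)).card

/-- `B_sp^+`: sign sequences with an even number of `−` entries. -/
def BspPlus (N : ℕ) (b : Seq N) : Prop := Even (minusCount N b)

/-- `B_sp^−`: sign sequences with an odd number of `−` entries. -/
def BspMinus (N : ℕ) (b : Seq N) : Prop := Odd (minusCount N b)

/-- The type-`D_N` Kashiwara raising operator `ẽ_l`, labels `1 ≤ l ≤ N`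
(`none` codes `0`).  For `1 ≤ l ≤ N−1` it replaces `(b_l, b_{l+1}) = (+,−)` by `(−,+)`;
`ẽ_N` replaces `(b_{N−1}, b_N) = (+,+)` by `(−,−)`. -/
def eD (N l : ℕ) (b : Seq N) : Option (Seq N) :=
  if h : 1 ≤ l ∧ l + 1 ≤ N then
    let i : Fin N := ⟨l - 1, by omega⟩
    let j : Fin N := ⟨l, by omega⟩
    if b i = true ∧ b j = false then
      some (Function.update (Function.update b i false) j true)
    else none
  else if h2 : l = N ∧ 2 ≤ N then
    let i : Fin N := ⟨N - 2, by omega⟩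
    let j : Fin N := ⟨N - 1, by omega⟩
    if b i = true ∧ b j = true then
      some (Function.update (Function.update b i false) j false)
    else none
  else none

/-- The type-`D_N` Kashiwara lowering operator `f̃_l`, labels `1 ≤ l ≤ N`.
For `1 ≤ l ≤ N−1` it replaces `(b_l, b_{l+1}) = (−,+)` by `(+,−)`;
`f̃_N` replaces `(b_{N−1}, b_N) = (−,−)` by `(+,+)`. -/
def fD (N l : ℕ) (b : Seq N) : Option (Seq N) :=
  if h : 1 ≤ l ∧ l + 1 ≤ N then
    let i : Fin N := ⟨l - 1, by omega⟩
    let j : Fin N := ⟨l, by omega⟩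
    if b i = false ∧ b j = true then
      some (Function.update (Function.update b i true) j false)
    else none
  else if h2 : l = N ∧ 2 ≤ N then
    let i : Fin N := ⟨N - 2, by omega⟩
    let j : Fin N := ⟨N - 1, by omega⟩
    if b i = false ∧ b j = false then
      some (Function.update (Function.update b i true) j true)
    else none
  else none


/-! ### Auxiliary machinery for Statement 3 -/

/-- Weighted sum measure: each `−` entry at index `i` contributes `N - 1 - i`. -/
def wsum (N : ℕ) (b : Seq N) : ℕ :=
  ∑ i ∈ Finset.univ.filter (fun i => b i = false), (N - 1 - (i:ℕ))

variable {N : ℕ}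

lemma filter_move (b : Seq N) (i j : Fin N) (hij : i ≠ j) (hbj : b j = true) :
    Finset.univ.filter
        (fun k => (Function.update (Function.update b i true) j false) k = false)
      = insert j ((Finset.univ.filter (fun k => b k = false)).erase i) := by
  ext k
  by_cases hkj : k = j
  · subst hkj; simp [Function.update_apply]
  · by_cases hki : k = i
    · subst hki; simp [Function.update_apply, hkj, hij]
    · simp [Function.update_apply, hkj, hki]

lemma filter_ann (b : Seq N) (i j : Fin N) :
    Finset.univ.filter
        (fun k => (Function.update (Function.update b i true) j true) k = false)
      = ((Finset.univ.filter (fun k => b k = false)).erase i).erase j := by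
  ext k
  by_cases hkj : k = j
  · subst hkj; simp [Function.update_apply]
  · by_cases hki : k = i
    · subst hki; simp [Function.update_apply, hkj]
    · simp [Function.update_apply, hkj, hki, and_comm]

lemma step_move (hN : 2 ≤ N) (b : Seq N) (i j : Fin N) (hj : (j:ℕ) = (i:ℕ) + 1)
    (hi : 1 ≤ (i:ℕ)) (hbi : b i = false) (hbj : b j = true) :
    ∃ c : Seq N, (∃ l, 2 ≤ l ∧ l ≤ N ∧ eD N l c = some b)
      ∧ c ⟨0, Nat.lt_of_lt_of_le Nat.two_pos hN⟩ = b ⟨0, Nat.lt_of_lt_of_le Nat.two_pos hN⟩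
      ∧ minusCount N c = minusCount N b
      ∧ wsum N c + 1 = wsum N b := by
  have hij : i ≠ j := by intro h; rw [h] at hj; omega
  set c : Seq N := Function.update (Function.update b i true) j false with hc
  have hci : c i = true := by simp [hc, Function.update_apply, hij]
  have hcj : c j = false := by simp [hc, Function.update_apply]
  have hjN : (j:ℕ) < N := j.isLt
  refine ⟨c, ⟨(i:ℕ) + 1, by omega, by omega, ?_⟩, ?_, ?_, ?_⟩
  · rw [eD, dif_pos (by omega : 1 ≤ (i:ℕ)+1 ∧ (i:ℕ)+1+1 ≤ N)]
    have e1 : (⟨(i:ℕ)+1-1, by omega⟩ : Fin N) = i := by ext; simp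
    have e2 : (⟨(i:ℕ)+1, by omega⟩ : Fin N) = j := by ext; simp [hj]
    simp only [e1, e2]
    rw [if_pos ⟨hci, hcj⟩]
    congr 1
    funext k
    by_cases hkj : k = j
    · subst hkj; simp [hc, Function.update_apply, hbj]
    · by_cases hki : k = i
      · subst hki; simp [hc, Function.update_apply, hij, hkj, hbi]
      · simp [hc, Function.update_apply, hkj, hki]
  · have h0i : (⟨0, by omega⟩ : Fin N) ≠ i := by intro h; rw [← h] at hi; simp at hi
    have h0j : (⟨0, by omega⟩ : Fin N) ≠ j := by
      intro h; have := congrArg Fin.val h; simp [hj] at this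
    simp [hc, Function.update_apply, h0i, h0j]
  · rw [minusCount, minusCount, hc, filter_move b i j hij hbj]
    have hjmem : j ∉ (Finset.univ.filter (fun k => b k = false)).erase i := by
      simp [hbj]
    have himem : i ∈ Finset.univ.filter (fun k => b k = false) := by simp [hbi]
    rw [Finset.card_insert_of_notMem hjmem, Finset.card_erase_of_mem himem]
    have : 1 ≤ (Finset.univ.filter (fun k => b k = false)).card :=
      Finset.card_pos.mpr ⟨i, himem⟩
    omega
  · rw [wsum, wsum, hc, filter_move b i j hij hbj]
    have hjmem : j ∉ (Finset.univ.filter (fun k => b k = false)).erase i := by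
      simp [hbj]
    have himem : i ∈ Finset.univ.filter (fun k => b k = false) := by simp [hbi]
    rw [Finset.sum_insert hjmem,
      ← Finset.sum_erase_add (Finset.univ.filter (fun k => b k = false)) _ himem]
    have hjN' : (i:ℕ) + 1 < N := hj ▸ hjN
    omega

lemma step_ann (hN : 3 ≤ N) (b : Seq N) (i j : Fin N) (hi : (i:ℕ) = N - 2)
    (hj : (j:ℕ) = N - 1) (hbi : b i = false) (hbj : b j = false) :
    ∃ c : Seq N, (∃ l, 2 ≤ l ∧ l ≤ N ∧ eD N l c = some b)
      ∧ c ⟨0, by omega⟩ = b ⟨0, by omega⟩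
      ∧ minusCount N c + 2 = minusCount N b
      ∧ wsum N c + 1 = wsum N b := by
  have hij : i ≠ j := by intro h; rw [h] at hi; omega
  set c : Seq N := Function.update (Function.update b i true) j true with hc
  have hci : c i = true := by simp [hc, Function.update_apply, hij]
  have hcj : c j = true := by simp [hc, Function.update_apply]
  refine ⟨c, ⟨N, by omega, le_refl N, ?_⟩, ?_, ?_, ?_⟩
  · rw [eD, dif_neg (by omega : ¬(1 ≤ N ∧ N + 1 ≤ N)),
      dif_pos (⟨rfl, by omega⟩ : N = N ∧ 2 ≤ N)]
    have e1 : (⟨N-2, by omega⟩ : Fin N) = i := by ext; simp [hi]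
    have e2 : (⟨N-1, by omega⟩ : Fin N) = j := by ext; simp [hj]
    simp only [e1, e2]
    rw [if_pos ⟨hci, hcj⟩]
    congr 1
    funext k
    by_cases hkj : k = j
    · subst hkj; simp [hc, Function.update_apply, hbj]
    · by_cases hki : k = i
      · subst hki; simp [hc, Function.update_apply, hij, hkj, hbi]
      · simp [hc, Function.update_apply, hkj, hki]
  · have h0i : (⟨0, by omega⟩ : Fin N) ≠ i := by
      intro h; have := congrArg Fin.val h; simp [hi] at this; omega
    have h0j : (⟨0, by omega⟩ : Fin N) ≠ j := by
      intro h; have := congrArg Fin.val h; simp [hj] at this; omega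
    simp [hc, Function.update_apply, h0i, h0j]
  · rw [minusCount, minusCount, hc, filter_ann b i j]
    have himem : i ∈ Finset.univ.filter (fun k => b k = false) := by simp [hbi]
    have hjmem : j ∈ (Finset.univ.filter (fun k => b k = false)).erase i := by
      simp [hbj, hij.symm]
    rw [Finset.card_erase_of_mem hjmem, Finset.card_erase_of_mem himem]
    have h1 : 1 ≤ (Finset.univ.filter (fun k => b k = false)).card :=
      Finset.card_pos.mpr ⟨i, himem⟩
    have hsub : ({i, j} : Finset (Fin N)) ⊆ Finset.univ.filter (fun k => b k = false) := by
      intro x hx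
      simp only [Finset.mem_insert, Finset.mem_singleton] at hx
      rcases hx with h | h <;> subst h <;> simp [hbi, hbj]
    have h2 : 2 ≤ (Finset.univ.filter (fun k => b k = false)).card :=
      (Finset.card_pair hij) ▸ Finset.card_le_card hsub
    omega
  · rw [wsum, wsum, hc, filter_ann b i j]
    have himem : i ∈ Finset.univ.filter (fun k => b k = false) := by simp [hbi]
    have hjmem : j ∈ (Finset.univ.filter (fun k => b k = false)).erase i := by
      simp [hbj, hij.symm]
    rw [← Finset.sum_erase_add (Finset.univ.filter (fun k => b k = false)) _ himem,
      ← Finset.sum_erase_add ((Finset.univ.filter (fun k => b k = false)).erase i) _ hjmem]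
    omega

lemma eq_start (hN : 2 ≤ N) (b : Seq N) (hb : Even (minusCount N b))
    (h1 : b ⟨0, Nat.lt_of_lt_of_le Nat.two_pos hN⟩ = false)
    (h : ∀ k : Fin N, 1 ≤ (k:ℕ) → (k:ℕ) ≤ N - 2 → b k = true) :
    b = fun i : Fin N => decide (0 < (i : ℕ) ∧ (i : ℕ) < N - 1) := by
  have hlast : b ⟨N - 1, by omega⟩ = false := by
    by_contra hlast
    have hfil : Finset.univ.filter (fun k => b k = false) = {(⟨0, by omega⟩ : Fin N)} := by
      ext k
      simp only [Finset.mem_filter, Finset.mem_univ, true_and, Finset.mem_singleton]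
      constructor
      · intro hk
        by_contra hk0
        have hkv : 1 ≤ (k:ℕ) := by
          rcases Nat.eq_zero_or_pos (k:ℕ) with h0 | h0
          · exact absurd (Fin.ext h0) hk0
          · exact h0
        have hkN : (k:ℕ) < N := k.isLt
        by_cases hmid : (k:ℕ) ≤ N - 2
        · rw [h k hkv hmid] at hk; exact Bool.noConfusion hk
        · have : (k:ℕ) = N - 1 := by omega
          have : k = (⟨N - 1, by omega⟩ : Fin N) := Fin.ext this
          rw [this] at hk
          rw [hk] at hlast
          exact hlast rfl
      · intro hk; rw [hk]; exact h1
    rw [minusCount, hfil] at hb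
    simp at hb
  funext k
  have hkN : (k:ℕ) < N := k.isLt
  rcases Nat.eq_zero_or_pos (k:ℕ) with h0 | h0
  · have : k = (⟨0, by omega⟩ : Fin N) := Fin.ext h0
    rw [this, h1]
    simp [h0]
  · by_cases hmid : (k:ℕ) ≤ N - 2
    · rw [h k h0 hmid]
      have : 0 < (k:ℕ) ∧ (k:ℕ) < N - 1 := by omega
      simp [this]
    · have hkv : (k:ℕ) = N - 1 := by omega
      have : k = (⟨N - 1, by omega⟩ : Fin N) := Fin.ext hkv
      rw [this, hlast]
      simp [hkv]

/-- Every `b ∈ B_sp^+` with first entry `−` is reachable from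
`(−,+,…,+,−)` (first and last entries `−`, all others `+`) using only the operators
`ẽ_l` with `2 ≤ l ≤ N` (type `D_N`, `N ≥ 2`). -/
theorem BspPlus_first_minus_reachable (N : ℕ) (hN : 2 ≤ N) (b : Seq N)
    (hb : BspPlus N b) (h1 : b ⟨0, by omega⟩ = false) :
    Relation.ReflTransGen
      (fun x y => ∃ l, 2 ≤ l ∧ l ≤ N ∧ eD N l x = some y)
      (fun i => decide (0 < (i : ℕ) ∧ (i : ℕ) < N - 1)) b := by
  suffices key : ∀ n (b : Seq N), wsum N b = n → Even (minusCount N b) →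
      b ⟨0, by omega⟩ = false →
      Relation.ReflTransGen
        (fun x y => ∃ l, 2 ≤ l ∧ l ≤ N ∧ eD N l x = some y)
        (fun i : Fin N => decide (0 < (i : ℕ) ∧ (i : ℕ) < N - 1)) b by
    exact key (wsum N b) b rfl hb h1
  intro n
  induction n using Nat.strong_induction_on with
  | _ n ih =>
    intro b hw hb h1
    by_cases hS : ∃ k : Fin N, 1 ≤ (k:ℕ) ∧ (k:ℕ) ≤ N - 2 ∧ b k = false
    · set S := Finset.univ.filter
        (fun k : Fin N => 1 ≤ (k:ℕ) ∧ (k:ℕ) ≤ N - 2 ∧ b k = false) with hSdef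
      have hSne : S.Nonempty := by
        obtain ⟨k, hk1, hk2, hk3⟩ := hS
        exact ⟨k, by simp [hSdef, hk1, hk2, hk3]⟩
      set i := S.max' hSne with hidef
      have hiS : i ∈ S := S.max'_mem hSne
      rw [hSdef, Finset.mem_filter] at hiS
      obtain ⟨-, hi1, hi2, hbi⟩ := hiS
      have hjlt : (i:ℕ) + 1 < N := by omega
      set j : Fin N := ⟨(i:ℕ)+1, hjlt⟩ with hjdef
      have hjval : (j:ℕ) = (i:ℕ) + 1 := rfl
      by_cases hbj : b j = true
      · obtain ⟨c, hR, h0, hcnt, hws⟩ := step_move hN b i j hjval hi1 hbi hbj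
        have hbc : Even (minusCount N c) := by rw [hcnt]; exact hb
        have hrec := ih (wsum N c) (by omega) c rfl hbc (h0.trans h1)
        exact hrec.tail hR
      · have hbjf : b j = false := by
          cases hbb : b j with
          | false => rfl
          | true => exact absurd hbb hbj
        have hiN2 : (i:ℕ) = N - 2 := by
          by_contra hne
          have hj2 : (j:ℕ) ≤ N - 2 := by omega
          have hjmem : j ∈ S := by
            rw [hSdef, Finset.mem_filter]
            exact ⟨Finset.mem_univ j, by omega, hj2, hbjf⟩
          have := Fin.le_def.mp (S.le_max' j hjmem)
          rw [← hidef] at this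
          omega
        have hjN1 : (j:ℕ) = N - 1 := by omega
        have hN3 : 3 ≤ N := by omega
        obtain ⟨c, hR, h0, hcnt, hws⟩ := step_ann hN3 b i j hiN2 hjN1 hbi hbjf
        have hbc : Even (minusCount N c) := by
          obtain ⟨m, hm⟩ := hb
          exact ⟨m - 1, by omega⟩
        have hrec := ih (wsum N c) (by omega) c rfl hbc (h0.trans h1)
        exact hrec.tail hR
    · push_neg at hS
      have heq : b = fun i : Fin N => decide (0 < (i : ℕ) ∧ (i : ℕ) < N - 1) := by
        refine eq_start hN b hb h1 (fun k hk1 hk2 => ?_)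
        have := hS k hk1 hk2
        cases hbb : b k with
        | true => rfl
        | false => exact absurd hbb this
      rw [heq]


end CrystalPaper
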